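/- Let m ∈ ℕ, m ≥ 1, (m-1)/m < λ ≤ m/(m+1), and k, p ∈ {-1, -2, ..., -m}. If z = (x₀, y₀) with k/λ ≤ x₀ < (k+1)/λ and p/λ ≤ y₀ < (p+1)/λ, then A(z) = (p, k) and A²(z) = (k, p); hence the set of limit points of the orbit of z is {(k,p), (p,k)}. -/

import Mathlib

noncomputable def A (l : ℝ) : ℝ × ℝ → ℝ × ℝ := fun p => ((⌊l * p.2⌋ : ℤ), (⌊l * p.1⌋ : ℤ))

theorem stmt14 (m : ℕ) (hm : 1 ≤ m) (l : ℝ)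
    (h1 : ((m : ℝ) - 1) / m < l) (h2 : l ≤ (m : ℝ) / (m + 1))
    (k p : ℤ) (hk1 : -(m : ℤ) ≤ k) (hk2 : k ≤ -1) (hp1 : -(m : ℤ) ≤ p) (hp2 : p ≤ -1)
    (x y : ℝ) (hx1 : (k : ℝ) / l ≤ x) (hx2 : x < ((k : ℝ) + 1) / l)
    (hy1 : (p : ℝ) / l ≤ y) (hy2 : y < ((p : ℝ) + 1) / l) :
    A l (x, y) = ((p : ℝ), (k : ℝ)) ∧
    (A l)^[2] (x, y) = ((k : ℝ), (p : ℝ)) ∧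
    {q : ℝ × ℝ | MapClusterPt q Filter.atTop (fun n => (A l)^[n] (x, y))}
      = {((k : ℝ), (p : ℝ)), ((p : ℝ), (k : ℝ))} := by
  have hmR : (1:ℝ) ≤ m := by exact_mod_cast hm
  have hl0 : 0 < l := lt_of_le_of_lt (div_nonneg (by linarith) (by linarith)) h1
  have hl1 : l < 1 := lt_of_le_of_lt h2 (by rw [div_lt_one (by linarith)]; linarith)
  have h1' : (m:ℝ) - 1 < l * m := by
    rw [div_lt_iff₀ (by linarith : (0:ℝ) < m)] at h1; linarith
  have key : ∀ j : ℤ, -(m:ℤ) ≤ j → j ≤ -1 → ⌊l * (j:ℝ)⌋ = j := by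
    intro j hj1 hj2
    have hjR1 : -(m:ℝ) ≤ (j:ℝ) := by exact_mod_cast hj1
    have hjR2 : (j:ℝ) ≤ -1 := by exact_mod_cast hj2
    rw [Int.floor_eq_iff]
    constructor
    · nlinarith
    · nlinarith
  have hfx : ⌊l * x⌋ = k := by
    rw [Int.floor_eq_iff]
    constructor
    · rw [div_le_iff₀ hl0] at hx1; linarith [hx1]
    · rw [lt_div_iff₀ hl0] at hx2; linarith [hx2]
  have hfy : ⌊l * y⌋ = p := by
    rw [Int.floor_eq_iff]
    constructor
    · rw [div_le_iff₀ hl0] at hy1; linarith [hy1]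
    · rw [lt_div_iff₀ hl0] at hy2; linarith [hy2]
  have hA1 : A l (x, y) = ((p : ℝ), (k : ℝ)) := by simp [A, hfx, hfy]
  have hAa : A l ((p:ℝ), (k:ℝ)) = ((k:ℝ), (p:ℝ)) := by
    simp [A, key k hk1 hk2, key p hp1 hp2]
  have hAb : A l ((k:ℝ), (p:ℝ)) = ((p:ℝ), (k:ℝ)) := by
    simp [A, key k hk1 hk2, key p hp1 hp2]
  have hstep : ∀ n : ℕ, (A l)^[n+1] (x, y)
      = if n % 2 = 0 then ((p:ℝ), (k:ℝ)) else ((k:ℝ), (p:ℝ)) := by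
    intro n
    induction n with
    | zero => simpa using hA1
    | succ n ih =>
      rw [Function.iterate_succ_apply', ih]
      by_cases h : n % 2 = 0
      · have h' : (n+1) % 2 = 1 := by omega
        simp [h, h', hAa]
      · have h0 : n % 2 = 1 := by omega
        have h' : (n+1) % 2 = 0 := by omega
        simp [h0, h', hAb]
  have hA2 : (A l)^[2] (x, y) = ((k : ℝ), (p : ℝ)) := by
    have := hstep 1; simpa using this
  refine ⟨hA1, hA2, ?_⟩
  ext q
  simp only [Set.mem_setOf_eq, Set.mem_insert_iff, Set.mem_singleton_iff]
  constructor
  · intro hq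
    by_contra hcon
    push_neg at hcon
    obtain ⟨hq1, hq2⟩ := hcon
    have hopen : ({((k:ℝ),(p:ℝ)), ((p:ℝ),(k:ℝ))} : Set (ℝ × ℝ))ᶜ ∈ nhds q := by
      refine IsOpen.mem_nhds ?_ ?_
      · exact ((Set.finite_singleton _).insert _).isClosed.isOpen_compl
      · simp [hq1, hq2]
    have hfreq := (mapClusterPt_iff_frequently.mp hq) _ hopen
    rw [Filter.frequently_atTop] at hfreq
    obtain ⟨n, hn, hfn⟩ := hfreq 1
    obtain ⟨n', rfl⟩ : ∃ n', n = n' + 1 := ⟨n - 1, by omega⟩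
    rw [hstep n'] at hfn
    by_cases h : n' % 2 = 0 <;> simp [h] at hfn
  · intro hq
    rw [mapClusterPt_iff_frequently]
    intro s hs
    rw [Filter.frequently_atTop]
    intro N
    rcases hq with rfl | rfl
    · refine ⟨2*N+2, by omega, ?_⟩
      have := hstep (2*N+1)
      have h1 : (2*N+1) % 2 = 1 := by omega
      rw [h1] at this
      simp only [this]
      exact mem_of_mem_nhds hs
    · refine ⟨2*N+1, by omega, ?_⟩
      have := hstep (2*N)
      have h1 : (2*N) % 2 = 0 := by omega
      rw [h1] at this
      simp only [this]
      exact mem_of_mem_nhds hs
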